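/- arXiv:1003.0569 — 4 statements merged into one kernel-verified Lean document; each statement's English description precedes it below -/
import Mathlib

section
/- Let X be a finite nonempty set, m a natural number, b ≥ 1 a natural number, and K : Fin m → X → ℕ with K j x < b for all j, x. Let L(x) = Σ_{j : Fin m} b^(m - 1 - j) * K j x. If x* ∈ X maximizes L over X (i.e. L(x*) ≥ L(y) for all y ∈ X), then x* is the best decision in the lexicographic procedure: for every y ∈ X, x* ≻_lex y or x* ~_lex y. -/
/-- Strict lexicographic preference for natural-number-valued criteria. -/
def LexPrefNat {X : Type*} {m : ℕ} (K : Fin m → X → ℕ) (x y : X) : Prop :=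
  ∃ j : Fin m, (∀ q : Fin m, q < j → K q x = K q y) ∧ K j x > K j y

/-- Lexicographic equivalence for natural-number-valued criteria. -/
def LexEquivNat {X : Type*} {m : ℕ} (K : Fin m → X → ℕ) (x y : X) : Prop :=
  ∀ j : Fin m, K j x = K j y

/-- Linear convolution with lexicographic importance coefficients `λ_j = b^(m-1-j)`. -/
def LexConv {X : Type*} {m : ℕ} (b : ℕ) (K : Fin m → X → ℕ) (x : X) : ℕ :=
  ∑ j : Fin m, b ^ (m - 1 - (j : ℕ)) * K j x

lemma lexA {b : ℕ} (hb : 1 ≤ b) :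
    ∀ (t : ℕ) (c : ℕ → ℕ), (∀ i < t, c i < b) →
      ∑ i ∈ Finset.range t, b ^ (t - 1 - i) * c i < b ^ t := by
  intro t
  induction t with
  | zero => intro c _; simp
  | succ t ih =>
    intro c hc
    rw [Finset.sum_range_succ']
    have h1 : ∑ i ∈ Finset.range t, b ^ (t + 1 - 1 - (i + 1)) * c (i + 1)
        = ∑ i ∈ Finset.range t, b ^ (t - 1 - i) * c (i + 1) := by
      apply Finset.sum_congr rfl
      intro i _
      congr 2
      omega
    rw [h1]
    have h2 : ∑ i ∈ Finset.range t, b ^ (t - 1 - i) * c (i + 1) < b ^ t :=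
      ih (fun i => c (i + 1)) (fun i hi => hc (i + 1) (by omega))
    have h3 : c 0 ≤ b - 1 := by have := hc 0 (by omega); omega
    have h4 : b ^ (t + 1 - 1 - 0) * c 0 ≤ b ^ t * (b - 1) := by
      simp only [Nat.add_sub_cancel, Nat.sub_zero]
      exact Nat.mul_le_mul_left _ h3
    calc ∑ i ∈ Finset.range t, b ^ (t - 1 - i) * c (i + 1) + b ^ (t + 1 - 1 - 0) * c 0
        < b ^ t + b ^ t * (b - 1) := by omega
      _ ≤ b ^ (t + 1) := by
          have : b ^ t + b ^ t * (b - 1) = b ^ t * b := by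
            rw [Nat.mul_sub_one]
            have : b ^ t ≤ b ^ t * b := Nat.le_mul_of_pos_right _ (by omega)
            omega
          rw [this, pow_succ]

lemma lexB {b m : ℕ} (hb : 1 ≤ b) (d e : ℕ → ℕ)
    (hd : ∀ q < m, d q < b) (j : ℕ) (hj : j < m)
    (heq : ∀ q < j, d q = e q) (hlt : d j < e j) :
    ∑ q ∈ Finset.range m, b ^ (m - 1 - q) * d q
      < ∑ q ∈ Finset.range m, b ^ (m - 1 - q) * e q := by
  have hsplit : ∀ f : ℕ → ℕ,
      ∑ q ∈ Finset.range m, f q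
        = (∑ q ∈ Finset.range j, f q) + f j + ∑ q ∈ Finset.Ico (j + 1) m, f q := by
    intro f
    rw [← Finset.sum_range_add_sum_Ico f (Nat.succ_le_of_lt hj), Finset.sum_range_succ]
  rw [hsplit, hsplit]
  have hA : ∑ q ∈ Finset.range j, b ^ (m - 1 - q) * d q
      = ∑ q ∈ Finset.range j, b ^ (m - 1 - q) * e q := by
    apply Finset.sum_congr rfl
    intro q hq
    rw [heq q (Finset.mem_range.mp hq)]
  -- tail bound for d
  have htail : ∑ q ∈ Finset.Ico (j + 1) m, b ^ (m - 1 - q) * d q < b ^ (m - 1 - j) := by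
    rw [Finset.sum_Ico_eq_sum_range]
    have := lexA hb (m - (j + 1)) (fun i => d (j + 1 + i))
      (fun i hi => hd (j + 1 + i) (by omega))
    have hcongr : ∑ i ∈ Finset.range (m - (j + 1)), b ^ (m - 1 - (j + 1 + i)) * d (j + 1 + i)
        = ∑ i ∈ Finset.range (m - (j + 1)), b ^ (m - (j + 1) - 1 - i) * d (j + 1 + i) := by
      apply Finset.sum_congr rfl
      intro i hi
      congr 2
      omega
    rw [hcongr]
    calc ∑ i ∈ Finset.range (m - (j + 1)), b ^ (m - (j + 1) - 1 - i) * d (j + 1 + i)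
        < b ^ (m - (j + 1)) := this
      _ ≤ b ^ (m - 1 - j) := Nat.pow_le_pow_right (by omega) (by omega)
  have hmid : b ^ (m - 1 - j) * d j + b ^ (m - 1 - j) ≤ b ^ (m - 1 - j) * e j := by
    have h5 : b ^ (m - 1 - j) * (d j + 1) ≤ b ^ (m - 1 - j) * e j :=
      Nat.mul_le_mul_left _ (by omega)
    rw [Nat.mul_succ] at h5
    exact h5
  have he_tail : 0 ≤ ∑ q ∈ Finset.Ico (j + 1) m, b ^ (m - 1 - q) * e q := Nat.zero_le _
  omega

/-- A maximizer of the linear convolution is the best decision in the lexicographic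
procedure. -/
theorem lexConv_argmax_is_lex_best {X : Type*} [Fintype X] [Nonempty X] {m : ℕ}
    {b : ℕ} (hb : 1 ≤ b) (K : Fin m → X → ℕ)
    (hK : ∀ (j : Fin m) (x : X), K j x < b)
    (xstar : X) (hmax : ∀ y : X, LexConv b K xstar ≥ LexConv b K y) :
    ∀ y : X, LexPrefNat K xstar y ∨ LexEquivNat K xstar y := by
  intro y
  by_cases hEq : ∀ j : Fin m, K j xstar = K j y
  · exact Or.inr hEq
  · left
    push_neg at hEq
    obtain ⟨j0, hj0⟩ := hEq
    have hP : ∃ n : ℕ, ∃ h : n < m, K ⟨n, h⟩ xstar ≠ K ⟨n, h⟩ y := ⟨j0.1, j0.2, by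
      simpa using hj0⟩
    classical
    let n := Nat.find hP
    obtain ⟨hn, hne⟩ := Nat.find_spec hP
    have hmin : ∀ q : Fin m, q.1 < n → K q xstar = K q y := by
      intro q hq
      by_contra hcon
      exact Nat.find_min hP hq ⟨q.2, by simpa using hcon⟩
    refine ⟨⟨n, hn⟩, fun q hq => hmin q hq, ?_⟩
    rcases Nat.lt_or_ge (K ⟨n, hn⟩ y) (K ⟨n, hn⟩ xstar) with h | h
    · exact h
    · exfalso
      have hlt : K ⟨n, hn⟩ xstar < K ⟨n, hn⟩ y := lt_of_le_of_ne h hne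
      -- build ℕ-indexed digit functions
      set d : ℕ → ℕ := fun q => if h : q < m then K ⟨q, h⟩ xstar else 0 with hdDef
      set e : ℕ → ℕ := fun q => if h : q < m then K ⟨q, h⟩ y else 0 with heDef
      have hconv : ∀ x : X, LexConv b K x
          = ∑ q ∈ Finset.range m, b ^ (m - 1 - q) *
              (if h : q < m then K ⟨q, h⟩ x else 0) := by
        intro x
        rw [LexConv, Finset.sum_range fun q => b ^ (m - 1 - q) * _]
        apply Finset.sum_congr rfl
        intro q _
        rw [dif_pos q.2]
      have key := lexB hb d e
        (fun q hq => by simp only [hdDef, dif_pos hq]; exact hK _ _)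
        n hn
        (fun q hq => by
          simp only [hdDef, heDef, dif_pos (lt_trans hq hn)]
          exact hmin ⟨q, lt_trans hq hn⟩ hq)
        (by simp only [hdDef, heDef, dif_pos hn]; rw [dif_pos hn, dif_pos hn]; exact hlt)
      rw [← hconv xstar, ← hconv y] at key
      exact absurd (hmax y) (not_le.mpr key)
end

section
/- Let X be a set, m a natural number, and μ : Fin m → X → X → ℝ a family of fuzzy preference relations with 0 ≤ μ j x y ≤ 1 for all j, x, y. Define μˢ j x y = max (μ j x y - μ j y x) 0, and the fuzzy strict lexicographic preference: x ≻_flex y iff there exists j : Fin m such that μˢ q x y = 0 and μˢ q y x = 0 for all q < j, and μˢ j x y > 0. Then for all x, y ∈ X exactly one of the following holds: x ≻_flex y, or y ≻_flex x, or (μˢ j x y = 0 and μˢ j y x = 0 for all j : Fin m), i.e. x and y are lexicographically equivalent. -/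
/-- Fuzzy attitude of superiority (fuzzy strict part) of a fuzzy preference relation. -/
def FuzzyStrict {X : Type*} {m : ℕ} (μ : Fin m → X → X → ℝ) (j : Fin m) (x y : X) : ℝ :=
  max (μ j x y - μ j y x) 0

/-- Fuzzy strict lexicographic preference. -/
def FLexPref {X : Type*} {m : ℕ} (μ : Fin m → X → X → ℝ) (x y : X) : Prop :=
  ∃ j : Fin m,
    (∀ q : Fin m, q < j → FuzzyStrict μ q x y = 0 ∧ FuzzyStrict μ q y x = 0) ∧
    FuzzyStrict μ j x y > 0

/-- Fuzzy lexicographic equivalence. -/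
def FLexEquiv {X : Type*} {m : ℕ} (μ : Fin m → X → X → ℝ) (x y : X) : Prop :=
  ∀ j : Fin m, FuzzyStrict μ j x y = 0 ∧ FuzzyStrict μ j y x = 0

lemma fuzzyStrict_not_both {X : Type*} {m : ℕ} (μ : Fin m → X → X → ℝ) (j : Fin m) (x y : X) :
    ¬ (FuzzyStrict μ j x y > 0 ∧ FuzzyStrict μ j y x > 0) := by
  rintro ⟨h1, h2⟩
  simp only [FuzzyStrict, lt_max_iff, lt_irrefl, or_false, sub_pos] at h1 h2
  exact absurd (h1.trans h2) (lt_irrefl _)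

/-- The fuzzy lexicographic preference is linked: for any two decisions exactly one of
`x ≻_flex y`, `y ≻_flex x`, or fuzzy lexicographic equivalence holds. -/
theorem fLexPref_linked {X : Type*} {m : ℕ} (μ : Fin m → X → X → ℝ)
    (hμ : ∀ (j : Fin m) (x y : X), 0 ≤ μ j x y ∧ μ j x y ≤ 1) :
    ∀ x y : X,
      (FLexPref μ x y ∧ ¬ FLexPref μ y x ∧ ¬ FLexEquiv μ x y) ∨
      (¬ FLexPref μ x y ∧ FLexPref μ y x ∧ ¬ FLexEquiv μ x y) ∨
      (¬ FLexPref μ x y ∧ ¬ FLexPref μ y x ∧ FLexEquiv μ x y) := by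
  classical
  intro x y
  by_cases heq : FLexEquiv μ x y
  · refine Or.inr (Or.inr ⟨?_, ?_, heq⟩)
    · rintro ⟨j, -, hj⟩; exact absurd (heq j).1 (ne_of_gt hj)
    · rintro ⟨j, -, hj⟩; exact absurd (heq j).2 (ne_of_gt hj)
  · have hex : ∃ n : ℕ, ∃ h : n < m,
        ¬ (FuzzyStrict μ ⟨n, h⟩ x y = 0 ∧ FuzzyStrict μ ⟨n, h⟩ y x = 0) := by
      by_contra h
      push_neg at h
      exact heq fun j => ⟨(h j.1 j.2).1, (h j.1 j.2).2⟩
    obtain ⟨hn, hboth⟩ := Nat.find_spec hex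
    set j : Fin m := ⟨Nat.find hex, hn⟩ with hjdef
    have hmin : ∀ q : Fin m, q < j → FuzzyStrict μ q x y = 0 ∧ FuzzyStrict μ q y x = 0 := by
      intro q hq
      have := Nat.find_min hex (show q.1 < Nat.find hex from hq)
      push_neg at this
      have h2 := this q.2
      rwa [Fin.eta] at h2
    have hpos : FuzzyStrict μ j x y > 0 ∨ FuzzyStrict μ j y x > 0 := by
      by_contra hc
      push_neg at hc
      exact hboth ⟨le_antisymm hc.1 (le_max_right _ _), le_antisymm hc.2 (le_max_right _ _)⟩
    rcases hpos with ha | hb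
    · refine Or.inl ⟨⟨j, hmin, ha⟩, ?_, heq⟩
      rintro ⟨k, hk, hkpos⟩
      rcases lt_trichotomy k j with h | h | h
      · exact absurd (hmin k h).2 (ne_of_gt hkpos)
      · exact fuzzyStrict_not_both μ j x y ⟨ha, h ▸ hkpos⟩
      · exact absurd (hk j h).2 (ne_of_gt ha)
    · refine Or.inr (Or.inl ⟨?_, ⟨j, fun q hq => ⟨(hmin q hq).2, (hmin q hq).1⟩, hb⟩, heq⟩)
      rintro ⟨k, hk, hkpos⟩
      rcases lt_trichotomy k j with h | h | h
      · exact absurd (hmin k h).1 (ne_of_gt hkpos)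
      · exact fuzzyStrict_not_both μ j x y ⟨h ▸ hkpos, hb⟩
      · exact absurd (hk j h).2 (ne_of_gt hb)
end

section
/- Let X be a set, m a natural number, and μ : Fin m → X → X → ℝ a family of fuzzy preference relations with 0 ≤ μ j x y ≤ 1 for all j, x, y. With μˢ j x y = max (μ j x y - μ j y x) 0 and the fuzzy strict lexicographic preference ≻_flex defined as stated, ≻_flex is asymmetric: for all x, y ∈ X, if x ≻_flex y then not y ≻_flex x. -/
/-- The fuzzy strict lexicographic preference is asymmetric. -/
theorem fLexPref_asymmetric {X : Type*} {m : ℕ} (μ : Fin m → X → X → ℝ)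
    (hμ : ∀ (j : Fin m) (x y : X), 0 ≤ μ j x y ∧ μ j x y ≤ 1) :
    ∀ x y : X, FLexPref μ x y → ¬ FLexPref μ y x := by
  rintro x y ⟨j, hj, hjpos⟩ ⟨k, hk, hkpos⟩
  rcases lt_trichotomy j k with h | h | h
  · have := (hk j h).2
    exact absurd this (ne_of_gt hjpos)
  · subst h
    have h1 : μ j x y - μ j y x > 0 := by
      have := hjpos
      unfold FuzzyStrict at this
      by_contra hc
      push_neg at hc
      simp [FuzzyStrict, max_eq_right hc] at this
    have : FuzzyStrict μ j y x = 0 := by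
      unfold FuzzyStrict
      apply max_eq_right
      linarith
    exact absurd this (ne_of_gt hkpos)
  · have := (hj k h).2
    exact absurd this (ne_of_gt hkpos)
end

section
/- Let X be a set, m a natural number, and μ : Fin m → X → X → ℝ a family of fuzzy preference relations with 0 ≤ μ j x y ≤ 1 for all j, x, y. Assume each μ j is transitive in the induced crisp sense: for all x, y, z ∈ X, if μ j x y > μ j y x and μ j y z > μ j z y then μ j x z > μ j z x; and assume each tie relation is transitive: if μ j x y = μ j y x and μ j y z = μ j z y then μ j x z = μ j z x. With μˢ j x y = max (μ j x y - μ j y x) 0 and the fuzzy strict lexicographic preference ≻_flex defined as stated, ≻_flex is transitive on X. -/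
lemma fuzzyStrict_pos_iff {X : Type*} {m : ℕ} (μ : Fin m → X → X → ℝ) (j : Fin m) (x y : X) :
    FuzzyStrict μ j x y > 0 ↔ μ j x y > μ j y x := by
  unfold FuzzyStrict
  constructor
  · intro h
    by_contra hc
    simp [max_eq_right (by linarith : μ j x y - μ j y x ≤ 0)] at h
  · intro h
    rw [max_eq_left (by linarith)]; linarith

lemma fuzzyStrict_tie_iff {X : Type*} {m : ℕ} (μ : Fin m → X → X → ℝ) (j : Fin m) (x y : X) :
    (FuzzyStrict μ j x y = 0 ∧ FuzzyStrict μ j y x = 0) ↔ μ j x y = μ j y x := by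
  unfold FuzzyStrict
  constructor
  · rintro ⟨h1, h2⟩
    rcases le_or_gt (μ j x y) (μ j y x) with h | h
    · rcases le_or_gt (μ j y x) (μ j x y) with h' | h'
      · linarith
      · rw [max_eq_left (by linarith)] at h2; linarith
    · rw [max_eq_left (by linarith)] at h1; linarith
  · intro h; rw [h]; simp

/-- If each fuzzy preference relation is transitive in the induced crisp sense and its
tie relation is transitive, then the fuzzy strict lexicographic preference is
transitive. -/
theorem fLexPref_transitive {X : Type*} {m : ℕ} (μ : Fin m → X → X → ℝ)
    (hμ : ∀ (j : Fin m) (x y : X), 0 ≤ μ j x y ∧ μ j x y ≤ 1)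
    (htrans : ∀ (j : Fin m) (x y z : X),
      μ j x y > μ j y x → μ j y z > μ j z y → μ j x z > μ j z x)
    (htie : ∀ (j : Fin m) (x y z : X),
      μ j x y = μ j y x → μ j y z = μ j z y → μ j x z = μ j z x) :
    ∀ x y z : X, FLexPref μ x y → FLexPref μ y z → FLexPref μ x z := by
  -- strict ∘ tie → strict
  have hst : ∀ (j : Fin m) (x y z : X),
      μ j x y > μ j y x → μ j y z = μ j z y → μ j x z > μ j z x := by
    intro j x y z hs ht
    rcases lt_trichotomy (μ j x z) (μ j z x) with h | h | h
    · exact absurd (htrans j z x y h hs) (by linarith [htie j y z y ht ht.symm, ht])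
    · exact absurd (htie j x z y h ht.symm) (by linarith)
    · exact h
  have hts : ∀ (j : Fin m) (x y z : X),
      μ j x y = μ j y x → μ j y z > μ j z y → μ j x z > μ j z x := by
    intro j x y z ht hs
    rcases lt_trichotomy (μ j x z) (μ j z x) with h | h | h
    · exact absurd (htrans j y z x hs h) (by linarith)
    · exact absurd (htie j y x z ht.symm h) (by linarith)
    · exact h
  rintro x y z ⟨j, hjlt, hj⟩ ⟨k, hklt, hk⟩
  rw [fuzzyStrict_pos_iff] at hj hk
  refine ⟨min j k, ?_, ?_⟩
  · intro q hq
    rw [fuzzyStrict_tie_iff]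
    have h1 := (fuzzyStrict_tie_iff μ q x y).mp (hjlt q (lt_of_lt_of_le hq (min_le_left _ _)))
    have h2 := (fuzzyStrict_tie_iff μ q y z).mp (hklt q (lt_of_lt_of_le hq (min_le_right _ _)))
    exact htie q x y z h1 h2
  · rw [fuzzyStrict_pos_iff]
    rcases lt_trichotomy j k with h | h | h
    · rw [min_eq_left h.le]
      exact hst j x y z hj ((fuzzyStrict_tie_iff μ j y z).mp (hklt j h))
    · subst h; rw [min_self]; exact htrans j x y z hj hk
    · rw [min_eq_right h.le]
      exact hts k x y z ((fuzzyStrict_tie_iff μ k x y).mp (hjlt k h)) hk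
end
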